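/- arXiv:1410.2128 — 2 statements merged into one kernel-verified Lean document; each statement's English description precedes it below -/
import Mathlib

section
/- Let g : ℕ → ℝ → ℝ be defined recursively by g 0 t = 1 and g (k+1) t = (1/(1 − t)) · ∫_t^1 (g k u)/(2 − u) du. Then for every k ∈ ℕ and every real t with 0 < t < 1, g k t ≥ t. -/
open MeasureTheory Set intervalIntegral

-- log(1+s) ≥ s - s²/2 for s ∈ [0,1]
lemma log_lb {s : ℝ} (h0 : 0 ≤ s) (h1 : s ≤ 1) :
    s - s ^ 2 / 2 ≤ Real.log (1 + s) := by
  rw [Real.le_log_iff_exp_le (by linarith)]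
  have hexp : Real.exp s ≤ (1 + s) * (1 + s ^ 2 / 2) := by
    have h := Real.exp_bound' h0 h1 (n := 3) (by norm_num)
    have hsum : (∑ m ∈ Finset.range 3, s ^ m / m.factorial) = 1 + s + s ^ 2 / 2 := by
      norm_num [Finset.sum_range_succ, Nat.factorial]
    rw [hsum] at h
    norm_num [Nat.factorial] at h
    have hfac : ((Nat.factorial 3 : ℝ)) = 6 := by norm_num [Nat.factorial]
    have h3 : s ^ 3 ≤ s := by
      calc s ^ 3 ≤ 1 ^ 2 * s := by nlinarith [pow_nonneg h0 2]
      _ = s := by ring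
    nlinarith [pow_nonneg h0 3, sq_nonneg s]
  have h2 : (1 : ℝ) + s ^ 2 / 2 ≤ Real.exp (s ^ 2 / 2) := by
    have := Real.add_one_le_exp (s ^ 2 / 2)
    linarith
  have h3 : Real.exp s ≤ (1 + s) * Real.exp (s ^ 2 / 2) := by
    have : (1 + s) * (1 + s ^ 2 / 2) ≤ (1 + s) * Real.exp (s ^ 2 / 2) := by
      apply mul_le_mul_of_nonneg_left h2 (by linarith)
    linarith
  rw [show s - s ^ 2 / 2 = s - s ^ 2 / 2 from rfl, Real.exp_sub, div_le_iff₀ (Real.exp_pos _)]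
  linarith

lemma integral_id_div {t : ℝ} (h0 : 0 ≤ t) (h1 : t ≤ 1) :
    ∫ u in t..1, u / (2 - u) = t - 1 + 2 * Real.log (2 - t) := by
  have hderiv : ∀ x ∈ uIcc t 1, HasDerivAt (fun u => -u - 2 * Real.log (2 - u))
      (x / (2 - x)) x := by
    intro x hx
    rw [uIcc_of_le h1] at hx
    have hne : (2 : ℝ) - x ≠ 0 := by
      have := hx.2; intro h; nlinarith
    have d1 : HasDerivAt (fun u : ℝ => 2 - u) (-1) x := (hasDerivAt_id x).const_sub 2
    have d2 : HasDerivAt (fun u : ℝ => Real.log (2 - u)) ((2 - x)⁻¹ * (-1)) x :=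
      (Real.hasDerivAt_log hne).comp x d1
    have d3 : HasDerivAt (fun u : ℝ => -u - 2 * Real.log (2 - u))
        (-1 - 2 * ((2 - x)⁻¹ * (-1))) x := (hasDerivAt_id x).neg.sub (d2.const_mul 2)
    convert d3 using 1
    field_simp
    ring
  have hint : IntervalIntegrable (fun u : ℝ => u / (2 - u)) volume t 1 := by
    apply ContinuousOn.intervalIntegrable
    apply ContinuousOn.div continuousOn_id (by fun_prop)
    intro x hx
    rw [uIcc_of_le h1] at hx
    have := hx.2; intro h; nlinarith
  rw [intervalIntegral.integral_eq_sub_of_hasDerivAt hderiv hint]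
  rw [show (2:ℝ) - 1 = 1 by norm_num, Real.log_one]
  ring

/-- The nested integrals arising as the probability of repeating the loop
`e₃e₄e₅` at least `k` further times from state `(ℓ₀,(0,t))` in the stochastic
timed automaton `𝒜_unfair`:  `g 0 t = 1` and
`g (k+1) t = (1/(1-t)) · ∫_t^1 g k u / (2-u) du`. -/
noncomputable def unfairLoopProb : ℕ → ℝ → ℝ
  | 0, _ => 1
  | k + 1, t => (1 / (1 - t)) * ∫ u in t..1, unfairLoopProb k u / (2 - u)

lemma unfairLoopProb_main (k : ℕ) :
    ContinuousOn (unfairLoopProb k) (Set.Ico (0:ℝ) 1) ∧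
      ∀ u ∈ Set.Ico (0:ℝ) 1, u ≤ unfairLoopProb k u ∧ unfairLoopProb k u ≤ 1 := by
  induction k with
  | zero =>
    refine ⟨continuousOn_const, fun u hu => ?_⟩
    exact ⟨by simpa [unfairLoopProb] using hu.2.le, by simp [unfairLoopProb]⟩
  | succ k ih =>
    obtain ⟨hc, hb⟩ := ih
    set f : ℝ → ℝ := fun u => unfairLoopProb k u / (2 - u) with hfdef
    have hfc : ContinuousOn f (Ico (0:ℝ) 1) := by
      apply hc.div (Continuous.continuousOn (by fun_prop))
      intro x hx
      have : (0:ℝ) < 2 - x := by have := hx.2; linarith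
      exact this.ne'
    have hf_int : ∀ t ∈ Ico (0:ℝ) 1, IntervalIntegrable f volume t 1 := by
      intro t ht
      rw [intervalIntegrable_iff, uIoc_of_le ht.2.le]
      rw [integrableOn_Ioc_iff_integrableOn_Ioo]
      have hmeas : AEStronglyMeasurable f (volume.restrict (Ioo t 1)) :=
        (hfc.mono (fun x hx => ⟨le_trans ht.1 hx.1.le, hx.2⟩)).aestronglyMeasurable
          measurableSet_Ioo
      refine ⟨hmeas, MeasureTheory.HasFiniteIntegral.restrict_of_bounded (C := 1)
        measure_Ioo_lt_top ?_⟩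
      filter_upwards [MeasureTheory.ae_restrict_mem measurableSet_Ioo] with x hx
      have hxm : x ∈ Ico (0:ℝ) 1 := ⟨le_trans ht.1 hx.1.le, hx.2⟩
      obtain ⟨hg1, hg2⟩ := hb x hxm
      have h2x : (1:ℝ) ≤ 2 - x := by have := hx.2; linarith
      have hgnn : 0 ≤ unfairLoopProb k x := le_trans hxm.1 hg1
      rw [Real.norm_eq_abs, abs_of_nonneg (by positivity)]
      rw [div_le_one (by linarith)]
      linarith
    have h01 : IntervalIntegrable f volume 0 1 := hf_int 0 ⟨le_refl _, one_pos⟩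
    have hF : ContinuousOn (fun t : ℝ => ∫ u in t..1, f u) (Icc (0:ℝ) 1) := by
      have h := (intervalIntegral.continuousOn_primitive_interval' h01
        (a := 1) right_mem_uIcc).neg
      rw [uIcc_of_le (by norm_num : (0:ℝ) ≤ 1)] at h
      convert h using 1
      funext x
      rw [intervalIntegral.integral_symm]
      rfl
    constructor
    · show ContinuousOn (fun t : ℝ => (1 / (1 - t)) * ∫ u in t..1, f u) (Ico (0:ℝ) 1)
      apply ContinuousOn.mul
      · apply ContinuousOn.div continuousOn_const (by fun_prop)
        intro x hx
        have : (0:ℝ) < 1 - x := by have := hx.2; linarith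
        exact this.ne'
      · exact hF.mono Ico_subset_Icc_self
    · intro t ht
      have h0t : (0:ℝ) ≤ t := ht.1
      have ht1 : t < 1 := ht.2
      have hpos : (0:ℝ) < 1 - t := by linarith
      have hint := hf_int t ht
      have hne1 : ∀ᵐ x : ℝ, x ≠ 1 := by
        have : ({1}ᶜ : Set ℝ) ∈ MeasureTheory.ae volume :=
          MeasureTheory.compl_mem_ae_iff.mpr (MeasureTheory.measure_singleton 1)
        filter_upwards [this] with x hx
        simpa using hx
      have hint0 : IntervalIntegrable (fun u : ℝ => u / (2 - u)) volume t 1 := by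
        apply ContinuousOn.intervalIntegrable
        apply ContinuousOn.div continuousOn_id (by fun_prop)
        intro x hx
        rw [uIcc_of_le ht1.le] at hx
        have : (0:ℝ) < 2 - x := by have := hx.2; linarith
        exact this.ne'
      have hlow : ∫ u in t..1, u / (2 - u) ≤ ∫ u in t..1, f u := by
        apply intervalIntegral.integral_mono_ae_restrict ht1.le hint0 hint
        rw [Filter.EventuallyLE, MeasureTheory.ae_restrict_iff' measurableSet_Icc]
        filter_upwards [hne1] with x hx hmem
        have hxm : x ∈ Ico (0:ℝ) 1 := ⟨le_trans h0t hmem.1, lt_of_le_of_ne hmem.2 hx⟩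
        have h2x : (0:ℝ) < 2 - x := by have := hxm.2; linarith
        have hle := (hb x hxm).1
        have h2x' : (0:ℝ) ≤ (2 - x)⁻¹ := by positivity
        simpa [div_eq_mul_inv, hfdef] using mul_le_mul_of_nonneg_right hle h2x'
      have hIlb : t * (1 - t) ≤ ∫ u in t..1, f u := by
        have hlog := log_lb (s := 1 - t) (by linarith) (by linarith)
        have h2t : (2:ℝ) - t = 1 + (1 - t) := by ring
        calc t * (1 - t) ≤ t - 1 + 2 * Real.log (2 - t) := by
              rw [h2t]; nlinarith [hlog]
          _ = ∫ u in t..1, u / (2 - u) := (integral_id_div h0t ht1.le).symm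
          _ ≤ ∫ u in t..1, f u := hlow
      have hIub : ∫ u in t..1, f u ≤ 1 - t := by
        have hconst : ∫ u in t..1, (1:ℝ) = 1 - t := by simp
        rw [← hconst]
        apply intervalIntegral.integral_mono_ae_restrict ht1.le hint
          intervalIntegrable_const
        rw [Filter.EventuallyLE, MeasureTheory.ae_restrict_iff' measurableSet_Icc]
        filter_upwards [hne1] with x hx hmem
        have hxm : x ∈ Ico (0:ℝ) 1 := ⟨le_trans h0t hmem.1, lt_of_le_of_ne hmem.2 hx⟩
        have hub := (hb x hxm).2
        have h2x : (0:ℝ) < 2 - x := by have := hxm.2; linarith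
        show unfairLoopProb k x / (2 - x) ≤ 1
        rw [div_le_one h2x]
        have := hxm.2
        linarith
      have he : unfairLoopProb (k + 1) t = (1 / (1 - t)) * ∫ u in t..1, f u := rfl
      constructor
      · calc t = (1 / (1 - t)) * (t * (1 - t)) := by field_simp
          _ ≤ (1 / (1 - t)) * ∫ u in t..1, f u :=
              mul_le_mul_of_nonneg_left hIlb (by positivity)
          _ = unfairLoopProb (k + 1) t := he.symm
      · calc unfairLoopProb (k + 1) t = (1 / (1 - t)) * ∫ u in t..1, f u := he
          _ ≤ (1 / (1 - t)) * (1 - t) :=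
              mul_le_mul_of_nonneg_left hIub (by positivity)
          _ = 1 := by field_simp

/-- For every `k ∈ ℕ` and every real `t` with `0 < t < 1`, `g k t ≥ t`. -/
theorem unfairLoopProb_ge (k : ℕ) (t : ℝ) (h0 : 0 < t) (h1 : t < 1) :
    unfairLoopProb k t ≥ t :=
  ((unfairLoopProb_main k).2 t ⟨h0.le, h1⟩).1
end

section
/- Let g : ℕ → ℝ → ℝ be defined recursively by g 0 t = 1 and g (k+1) t = (1/(1 − t)) · ∫_t^1 (g k u)/(2 − u) du. Then for every k ∈ ℕ, (1/2) · ∫_0^1 (g k t)/(2 − t) dt ≥ log 2 − 1/2, and moreover log 2 − 1/2 > 0. -/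
open MeasureTheory Set intervalIntegral

private lemma ulp_succ (k : ℕ) (t : ℝ) :
    unfairLoopProb (k + 1) t = (1 / (1 - t)) * ∫ u in t..1, unfairLoopProb k u / (2 - u) :=
  rfl

private lemma ulp_C_pos : (0:ℝ) < 4 * Real.log 2 - 2 := by
  nlinarith [Real.log_two_gt_d9]

private lemma ulp_C_le_one : (4 * Real.log 2 - 2 : ℝ) ≤ 1 := by
  nlinarith [Real.log_two_lt_d9]

private lemma ulp_int_sq (t : ℝ) (ht : t ≤ 1) :
    (∫ u in t..1, ((2 - u) ^ 2)⁻¹) = (1 - t) / (2 - t) := by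
  have h2t : (0:ℝ) < 2 - t := by linarith
  have hder : ∀ x ∈ Set.uIcc t 1, HasDerivAt (fun u : ℝ => (2 - u)⁻¹) (((2 - x) ^ 2)⁻¹) x := by
    intro x hx
    rw [Set.uIcc_of_le ht] at hx
    have h2x : (0:ℝ) < 2 - x := by have := hx.2; linarith
    have h1 : HasDerivAt (fun u : ℝ => 2 - u) (-1) x := by
      simpa using (hasDerivAt_id x).const_sub 2
    have h2 := h1.inv (ne_of_gt h2x)
    rw [show ((2 - x) ^ 2)⁻¹ = - -1 / (2 - x) ^ 2 by ring]
    exact h2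
  have hint : IntervalIntegrable (fun u => ((2 - u) ^ 2)⁻¹) volume t 1 := by
    apply ContinuousOn.intervalIntegrable
    apply ContinuousOn.inv₀ ((continuousOn_const.sub continuousOn_id).pow 2)
    intro u hu
    rw [Set.uIcc_of_le ht] at hu
    have h2u : (0:ℝ) < 2 - u := by have := hu.2; linarith
    exact pow_ne_zero 2 (ne_of_gt h2u)
  rw [intervalIntegral.integral_eq_sub_of_hasDerivAt hder hint]
  have hne : (2 - t : ℝ) ≠ 0 := ne_of_gt h2t
  norm_num
  field_simp
  ring

private lemma ulp_lower_int {k : ℕ}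
    (hI : IntegrableOn (fun u => unfairLoopProb k u / (2 - u)) (Icc 0 1) volume)
    (hL : ∀ u ∈ Ico (0:ℝ) 1, (4 * Real.log 2 - 2) / (2 - u) ≤ unfairLoopProb k u)
    (t : ℝ) (ht : t ∈ Ico (0:ℝ) 1) :
    (4 * Real.log 2 - 2) * ((1 - t) / (2 - t)) ≤
      ∫ u in t..1, unfairLoopProb k u / (2 - u) := by
  have hii : IntervalIntegrable (fun u => unfairLoopProb k u / (2 - u)) volume t 1 := by
    rw [intervalIntegrable_iff_integrableOn_Icc_of_le ht.2.le]
    exact hI.mono_set (Icc_subset_Icc ht.1 le_rfl)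
  have hlo_ii : IntervalIntegrable
      (fun u => (4 * Real.log 2 - 2) * ((2 - u) ^ 2)⁻¹) volume t 1 := by
    apply ContinuousOn.intervalIntegrable
    apply continuousOn_const.mul
    apply ContinuousOn.inv₀
    · exact ((continuousOn_const.sub continuousOn_id).pow 2)
    · intro u hu
      rw [Set.uIcc_of_le ht.2.le] at hu
      have h2u : (0:ℝ) < 2 - u := by have := hu.2; linarith
      exact pow_ne_zero 2 (ne_of_gt h2u)
  have hae : (fun u => (4 * Real.log 2 - 2) * ((2 - u) ^ 2)⁻¹)
      ≤ᵐ[volume.restrict (Icc t 1)] (fun u => unfairLoopProb k u / (2 - u)) := by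
    have h1 : ∀ᵐ u : ℝ ∂(volume.restrict (Icc t 1)), u ≠ 1 := by
      refine ae_restrict_of_ae ?_
      rw [ae_iff]
      have : {u : ℝ | ¬ u ≠ 1} = {1} := by ext u; simp
      rw [this]
      exact Real.volume_singleton
    have h2 : ∀ᵐ u : ℝ ∂(volume.restrict (Icc t 1)), u ∈ Icc t 1 :=
      ae_restrict_mem measurableSet_Icc
    filter_upwards [h1, h2] with u hu1 hu2
    have hu01 : u ∈ Ico (0:ℝ) 1 :=
      ⟨le_trans ht.1 hu2.1, lt_of_le_of_ne hu2.2 hu1⟩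
    have h2u : (0:ℝ) < 2 - u := by have := hu2.2; linarith
    have key := hL u hu01
    have heq : (4 * Real.log 2 - 2) * ((2 - u) ^ 2)⁻¹
        = ((4 * Real.log 2 - 2) / (2 - u)) / (2 - u) := by
      rw [div_div, ← sq, div_eq_mul_inv]
    rw [heq]
    gcongr
  have hmono := intervalIntegral.integral_mono_ae_restrict ht.2.le hlo_ii hii hae
  calc (4 * Real.log 2 - 2) * ((1 - t) / (2 - t))
      = ∫ u in t..1, (4 * Real.log 2 - 2) * ((2 - u) ^ 2)⁻¹ := by
        rw [intervalIntegral.integral_const_mul, ulp_int_sq t ht.2.le]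
    _ ≤ _ := hmono

set_option maxHeartbeats 1000000 in
private lemma ulp_key (k : ℕ) :
    IntegrableOn (fun u => unfairLoopProb k u / (2 - u)) (Icc 0 1) volume ∧
    (∀ t ∈ Icc (0:ℝ) 1, 0 ≤ unfairLoopProb k t ∧ unfairLoopProb k t ≤ 1) ∧
    (∀ t ∈ Ico (0:ℝ) 1, (4 * Real.log 2 - 2) / (2 - t) ≤ unfairLoopProb k t) := by
  induction k with
  | zero =>
    refine ⟨?_, ?_, ?_⟩
    · apply ((MeasureTheory.integrableOn_const_iff (C := (1 : ℝ))).mpr (Or.inr ?_)).mono' ?_ ?_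
      · exact measure_Icc_lt_top
      · apply Measurable.aestronglyMeasurable
        simp only [unfairLoopProb]
        exact measurable_const.div (measurable_const.sub measurable_id)
      · refine (ae_restrict_iff' measurableSet_Icc).mpr (ae_of_all _ fun t ht => ?_)
        have h2t : (1:ℝ) ≤ 2 - t := by have := ht.2; linarith
        simp only [unfairLoopProb]
        rw [Real.norm_eq_abs, abs_div, abs_one]
        rw [abs_of_pos (by linarith : (0:ℝ) < 2 - t)]
        rw [div_le_one (by linarith)]
        linarith
    · intro t _
      simp [unfairLoopProb]
    · intro t ht
      have h2t : (1:ℝ) ≤ 2 - t := by have := ht.2; linarith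
      simp only [unfairLoopProb]
      rw [div_le_one (by linarith)]
      linarith [ulp_C_le_one]
  | succ k ih =>
    obtain ⟨hI, hB, hL⟩ := ih
    -- bounds for k+1
    have hB' : ∀ t ∈ Icc (0:ℝ) 1,
        0 ≤ unfairLoopProb (k+1) t ∧ unfairLoopProb (k+1) t ≤ 1 := by
      intro t ht
      rcases eq_or_lt_of_le ht.2 with h1 | hlt
      · subst h1
        rw [ulp_succ]
        norm_num
      · have h1t : (0:ℝ) < 1 - t := by linarith
        have hii : IntervalIntegrable (fun u => unfairLoopProb k u / (2 - u)) volume t 1 := by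
          rw [intervalIntegrable_iff_integrableOn_Icc_of_le hlt.le]
          exact hI.mono_set (Icc_subset_Icc ht.1 le_rfl)
        have hnn : (0:ℝ) ≤ ∫ u in t..1, unfairLoopProb k u / (2 - u) := by
          apply intervalIntegral.integral_nonneg hlt.le
          intro u hu
          have h2u : (0:ℝ) < 2 - u := by have := hu.2; linarith
          exact div_nonneg (hB u ⟨le_trans ht.1 hu.1, hu.2⟩).1 h2u.le
        have hub : (∫ u in t..1, unfairLoopProb k u / (2 - u)) ≤ 1 - t := by
          have := intervalIntegral.integral_mono_on hlt.le hii
            (_root_.intervalIntegrable_const (c := (1:ℝ))) (fun u hu => ?_)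
          · simpa using this
          · have hu1 : u ≤ 1 := hu.2
            have h2u : (0:ℝ) < 2 - u := by linarith
            rw [div_le_one h2u]
            have := (hB u ⟨le_trans ht.1 hu.1, hu.2⟩).2
            linarith
        constructor
        · rw [ulp_succ]
          exact mul_nonneg (by positivity) hnn
        · rw [ulp_succ]
          calc (1 / (1 - t)) * ∫ u in t..1, unfairLoopProb k u / (2 - u)
              ≤ (1 / (1 - t)) * (1 - t) := by
                apply mul_le_mul_of_nonneg_left hub
                positivity
            _ = 1 := by field_simp
    refine ⟨?_, hB', ?_⟩
    · -- integrability for k+1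
      have hcont : ContinuousOn
          (fun t => ∫ u in t..1, unfairLoopProb k u / (2 - u)) (Icc 0 1) := by
        have h := intervalIntegral.continuousOn_primitive_interval_left
          (f := fun u => unfairLoopProb k u / (2 - u)) (μ := volume) (a := 0) (b := 1)
          (by rwa [Set.uIcc_of_le (zero_le_one)])
        rwa [Set.uIcc_of_le (zero_le_one)] at h
      have hmeas : AEStronglyMeasurable
          (fun t => unfairLoopProb (k+1) t / (2 - t)) (volume.restrict (Icc 0 1)) := by
        simp only [ulp_succ]
        have m1 : Measurable fun t : ℝ => 1 / (1 - t) := by fun_prop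
        have m3 : Measurable fun t : ℝ => 2 - t := by fun_prop
        have h2 : AEMeasurable (fun t => ∫ u in t..1, unfairLoopProb k u / (2 - u))
            (volume.restrict (Icc (0:ℝ) 1)) :=
          hcont.aemeasurable measurableSet_Icc
        exact ((m1.aemeasurable.mul h2).div m3.aemeasurable).aestronglyMeasurable
      apply ((MeasureTheory.integrableOn_const_iff (C := (1 : ℝ))).mpr
        (Or.inr (measure_Icc_lt_top (a := (0:ℝ)) (b := 1)))).mono' hmeas
      refine (ae_restrict_iff' measurableSet_Icc).mpr (ae_of_all _ fun t ht => ?_)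
      have h2t : (1:ℝ) ≤ 2 - t := by have := ht.2; linarith
      obtain ⟨hge, hle⟩ := hB' t ht
      rw [Real.norm_eq_abs, abs_div, abs_of_nonneg hge,
        abs_of_pos (by linarith : (0:ℝ) < 2 - t), div_le_one (by linarith)]
      linarith
    · -- lower bound for k+1
      intro t ht
      have h1t : (0:ℝ) < 1 - t := by have := ht.2; linarith
      have hlow := ulp_lower_int hI hL t ht
      have heq : (1 / (1 - t)) * ((4 * Real.log 2 - 2) * ((1 - t) / (2 - t)))
          = (4 * Real.log 2 - 2) / (2 - t) := by
        field_simp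
      rw [ulp_succ]
      calc (4 * Real.log 2 - 2) / (2 - t)
          = (1 / (1 - t)) * ((4 * Real.log 2 - 2) * ((1 - t) / (2 - t))) := heq.symm
        _ ≤ (1 / (1 - t)) * ∫ u in t..1, unfairLoopProb k u / (2 - u) := by
            apply mul_le_mul_of_nonneg_left hlow
            positivity

/-- For every `k`, `(1/2) · ∫_0^1 g k t / (2 - t) dt ≥ log 2 - 1/2`,
and moreover `log 2 - 1/2 > 0`. -/
theorem unfairLoopProb_integral_ge :
    (∀ k : ℕ,
      (1 / 2 : ℝ) * ∫ t in (0 : ℝ)..1, unfairLoopProb k t / (2 - t) ≥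
        Real.log 2 - 1 / 2) ∧
    Real.log 2 - 1 / 2 > 0 := by
  constructor
  · intro k
    obtain ⟨hI, _, hL⟩ := ulp_key k
    have h := ulp_lower_int hI hL 0 (by norm_num)
    norm_num at h
    rw [ge_iff_le]
    nlinarith
  · nlinarith [Real.log_two_gt_d9]
end
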